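/- Define, for disjoint A, B ⊆ N and S ⊆ B: J_{A,B}(S) := I(X_S; Ŷ_{B\S}, Ŷ_A, Y | X_A, X_{B\S}) − I(Y_S; Ŷ_S | X_A, Ŷ_A, Y, X_B, Ŷ_{B\S}). If B is nonempty and J_{A,B}(B) ≥ 0, then there exists a nonempty C ⊆ B such that J_{A,C}(S) ≥ 0 for all S ⊆ C. -/

import Mathlib

open Finset
attribute [local instance] Classical.propDecidable

/-- Shannon entropy of a random variable `f` on a finite probability space
with mass function `p`. -/
noncomputable def ent {Ω α : Type} [Fintype Ω] [Fintype α] [DecidableEq α]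
    (p : Ω → ℝ) (f : Ω → α) : ℝ :=
  ∑ a : α, Real.negMulLog (∑ ω ∈ Finset.univ.filter (fun ω => f ω = a), p ω)

/-- Conditional mutual information `I(f; g | h)`. -/
noncomputable def cmi {Ω α β γ : Type} [Fintype Ω] [Fintype α] [DecidableEq α]
    [Fintype β] [DecidableEq β] [Fintype γ] [DecidableEq γ]
    (p : Ω → ℝ) (f : Ω → α) (g : Ω → β) (h : Ω → γ) : ℝ :=
  ent p (fun ω => (f ω, h ω)) + ent p (fun ω => (g ω, h ω))
    - ent p (fun ω => (f ω, g ω, h ω)) - ent p h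

/-- Mutual information `I(f; g)`. -/
noncomputable def mi {Ω α β : Type} [Fintype Ω] [Fintype α] [DecidableEq α]
    [Fintype β] [DecidableEq β] (p : Ω → ℝ) (f : Ω → α) (g : Ω → β) : ℝ :=
  ent p f + ent p g - ent p (fun ω => (f ω, g ω))

/-- Conditional entropy `H(f | g)`. -/
noncomputable def condEnt {Ω α β : Type} [Fintype Ω] [Fintype α] [DecidableEq α]
    [Fintype β] [DecidableEq β] (p : Ω → ℝ) (f : Ω → α) (g : Ω → β) : ℝ :=
  ent p (fun ω => (f ω, g ω)) - ent p g

/-- The tuple of random variables `(Z_i)_{i ∈ S}`. -/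
def restr {Ω ι V : Type} (Z : ι → Ω → V) (S : Finset ι) (ω : Ω) :
    {i // i ∈ S} → V := fun i => Z i.1 ω

section Aux
variable {Ω : Type} [Fintype Ω]

noncomputable def code {α β : Type} [Nonempty β] (f : Ω → α) (g : Ω → β) (a : α) : β :=
  if h : ∃ ω, f ω = a then g h.choose else Classical.arbitrary _

lemma code_eq {α β : Type} [Nonempty β] {f : Ω → α} {g : Ω → β} {a : α}
    (ω : Ω) (hω : f ω = a) : ∃ ω', f ω' = a ∧ code f g a = g ω' := by
  have h : ∃ ω', f ω' = a := ⟨ω, hω⟩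
  exact ⟨h.choose, h.choose_spec, dif_pos h⟩

lemma ent_congr (p : Ω → ℝ) {α β : Type} [Fintype α] [DecidableEq α] [Fintype β] [DecidableEq β]
    (f : Ω → α) (g : Ω → β) (hfg : ∀ ω ω', f ω = f ω' ↔ g ω = g ω') :
    ent p f = ent p g := by
  rcases isEmpty_or_nonempty Ω with hΩ | hΩ
  · have hf : ∀ (h : Ω → ℝ), ∀ s : Finset Ω, ∑ ω ∈ s, h ω = 0 := by
      intro h s
      apply Finset.sum_eq_zero; intro ω _; exact hΩ.elim ω
    unfold ent
    simp only [hf]; simp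
  · have hα : Nonempty α := ⟨f (Classical.arbitrary Ω)⟩
    have hβ : Nonempty β := ⟨g (Classical.arbitrary Ω)⟩
    unfold ent
    rw [← Finset.sum_subset (Finset.subset_univ (Finset.univ.image f)) (by
      intro a _ hb
      simp only [Finset.mem_image, Finset.mem_univ, true_and, not_exists] at hb
      have : Finset.univ.filter (fun ω => f ω = a) = ∅ := by ext ω; simp [hb ω]
      rw [this]; simp),
      ← Finset.sum_subset (Finset.subset_univ (Finset.univ.image g)) (by
      intro b _ hb
      simp only [Finset.mem_image, Finset.mem_univ, true_and, not_exists] at hb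
      have : Finset.univ.filter (fun ω => g ω = b) = ∅ := by ext ω; simp [hb ω]
      rw [this]; simp)]
    refine Finset.sum_nbij' (code f g) (code g f) ?_ ?_ ?_ ?_ ?_
    all_goals intro a ha
    all_goals simp only [Finset.mem_image, Finset.mem_univ, true_and] at ha
    all_goals obtain ⟨ω, hω⟩ := ha
    · obtain ⟨ω1, h1, e1⟩ := code_eq (g := g) ω hω
      rw [e1]
      simp only [Finset.mem_image, Finset.mem_univ, true_and]
      exact ⟨ω1, rfl⟩
    · obtain ⟨ω1, h1, e1⟩ := code_eq (g := f) ω hω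
      rw [e1]
      simp only [Finset.mem_image, Finset.mem_univ, true_and]
      exact ⟨ω1, rfl⟩
    · obtain ⟨ω1, h1, e1⟩ := code_eq (g := g) ω hω
      rw [e1]
      obtain ⟨ω2, h2, e2⟩ := code_eq (g := f) ω1 rfl
      rw [e2, ← h1, (hfg ω2 ω1).2 h2]
    · obtain ⟨ω1, h1, e1⟩ := code_eq (g := f) ω hω
      rw [e1]
      obtain ⟨ω2, h2, e2⟩ := code_eq (g := g) ω1 rfl
      rw [e2, ← h1, (hfg ω2 ω1).1 h2]
    · obtain ⟨ω1, h1, e1⟩ := code_eq (g := g) ω hω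
      rw [e1]
      congr 1
      apply Finset.sum_congr _ (fun _ _ => rfl)
      ext ω'
      simp only [Finset.mem_filter, Finset.mem_univ, true_and, ← h1]
      exact hfg ω' ω1

end Aux

section Aux2
variable {Ω : Type} [Fintype Ω]

lemma mass_congr (p : Ω → ℝ) {Q R : Ω → Prop} [DecidablePred Q] [DecidablePred R]
    (hQR : ∀ ω, Q ω ↔ R ω) :
    ∑ ω ∈ univ.filter Q, p ω = ∑ ω ∈ univ.filter R, p ω := by
  refine Finset.sum_congr ?_ (fun _ _ => rfl)
  ext ω; simp [hQR ω]

lemma mass_split (p : Ω → ℝ) {κ : Type} [Fintype κ] [DecidableEq κ]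
    {Q : Ω → Prop} [DecidablePred Q] (k : Ω → κ) :
    ∑ ω ∈ univ.filter Q, p ω
      = ∑ x : κ, ∑ ω ∈ univ.filter (fun ω => Q ω ∧ k ω = x), p ω := by
  classical
  rw [← Finset.sum_fiberwise (univ.filter Q) k p]
  refine Finset.sum_congr rfl (fun x _ => ?_)
  refine Finset.sum_congr ?_ (fun _ _ => rfl)
  rw [Finset.filter_filter]

lemma neg_mul_sum {κ : Type} [Fintype κ] (F : κ → ℝ) (x y : ℝ) (hx : x = ∑ k, F k) :
    -(x * y) = ∑ k, -(F k * y) := by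
  rw [hx, Finset.sum_mul, ← Finset.sum_neg_distrib]

lemma negMulLog_sum {κ : Type} [Fintype κ] (F : κ → ℝ) (x : ℝ) (hx : x = ∑ k, F k) :
    Real.negMulLog x = ∑ k, -(F k * Real.log x) := by
  rw [Real.negMulLog, neg_mul]
  exact neg_mul_sum F x (Real.log x) hx

lemma gibbs {α β γ : Type} [Fintype α] [Fintype β] [Fintype γ]
    (P : α → β → γ → ℝ) (hP0 : ∀ a b c, 0 ≤ P a b c)
    (htot : ∑ a, ∑ b, ∑ c, P a b c = 1) :
    0 ≤ ∑ a, ∑ b, ∑ c,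
      (-(P a b c * Real.log (∑ b', P a b' c)) + -(P a b c * Real.log (∑ a', P a' b c))
        - -(P a b c * Real.log (P a b c)) - -(P a b c * Real.log (∑ a', ∑ b', P a' b' c))) := by
  classical
  set PFH : α → γ → ℝ := fun a c => ∑ b, P a b c with hPFHdef
  set PGH : β → γ → ℝ := fun b c => ∑ a, P a b c with hPGHdef
  set PH : γ → ℝ := fun c => ∑ a, ∑ b, P a b c with hPHdef
  have hPFH0 : ∀ a c, 0 ≤ PFH a c := fun a c => Finset.sum_nonneg fun b _ => hP0 a b c
  have hPGH0 : ∀ b c, 0 ≤ PGH b c := fun b c => Finset.sum_nonneg fun a _ => hP0 a b c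
  have hPH0 : ∀ c, 0 ≤ PH c := fun c => Finset.sum_nonneg fun a _ => hPFH0 a c
  have hPle : ∀ a b c, P a b c ≤ PFH a c := fun a b c =>
    Finset.single_le_sum (fun b' _ => hP0 a b' c) (Finset.mem_univ b)
  have hPle2 : ∀ a b c, P a b c ≤ PGH b c := fun a b c =>
    Finset.single_le_sum (fun a' _ => hP0 a' b c) (Finset.mem_univ a)
  have hPle3 : ∀ a c, PFH a c ≤ PH c := fun a c =>
    Finset.single_le_sum (fun a' _ => hPFH0 a' c) (Finset.mem_univ a)
  set R : α → β → γ → ℝ :=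
    fun a b c => if P a b c = 0 then 0 else PFH a c * PGH b c / PH c with hRdef
  have key : ∀ a b c,
      P a b c - R a b c ≤
      (-(P a b c * Real.log (PFH a c)) + -(P a b c * Real.log (PGH b c))
        - -(P a b c * Real.log (P a b c)) - -(P a b c * Real.log (PH c))) := by
    intro a b c
    by_cases hP : P a b c = 0
    · simp [hP, hRdef]
    · have hPpos : 0 < P a b c := lt_of_le_of_ne (hP0 a b c) (Ne.symm hP)
      have hFH : 0 < PFH a c := lt_of_lt_of_le hPpos (hPle a b c)
      have hGH : 0 < PGH b c := lt_of_lt_of_le hPpos (hPle2 a b c)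
      have hH : 0 < PH c := lt_of_lt_of_le hFH (hPle3 a c)
      have hR : R a b c = PFH a c * PGH b c / PH c := if_neg hP
      have hlog : Real.log (PFH a c * PGH b c / (P a b c * PH c))
          ≤ PFH a c * PGH b c / (P a b c * PH c) - 1 :=
        Real.log_le_sub_one_of_pos
          (div_pos (mul_pos hFH hGH) (mul_pos hPpos hH))
      have hsplit : Real.log (PFH a c * PGH b c / (P a b c * PH c))
          = Real.log (PFH a c) + Real.log (PGH b c)
            - (Real.log (P a b c) + Real.log (PH c)) := by
        rw [Real.log_div (ne_of_gt (mul_pos hFH hGH)) (ne_of_gt (mul_pos hPpos hH)),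
          Real.log_mul (ne_of_gt hFH) (ne_of_gt hGH),
          Real.log_mul (ne_of_gt hPpos) (ne_of_gt hH)]
      rw [hsplit] at hlog
      have h2 := mul_le_mul_of_nonneg_left hlog (le_of_lt hPpos)
      have h3 : P a b c * (PFH a c * PGH b c / (P a b c * PH c) - 1)
          = PFH a c * PGH b c / PH c - P a b c := by
        field_simp
      rw [h3] at h2
      rw [hR]
      nlinarith [h2]
  have htotc : ∑ c, PH c = 1 := by
    rw [← htot]
    exact (Finset.sum_congr rfl (fun c _ => rfl)).trans
      ((Finset.sum_comm).trans (Finset.sum_congr rfl (fun a _ => Finset.sum_comm)))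
  have hRtot : ∑ a, ∑ b, ∑ c, R a b c ≤ 1 := by
    have step1 : ∑ a, ∑ b, ∑ c, R a b c = ∑ c, ∑ a, ∑ b, R a b c :=
      (Finset.sum_congr rfl fun a _ => Finset.sum_comm).trans Finset.sum_comm
    rw [step1, ← htotc]
    refine Finset.sum_le_sum (fun c _ => ?_)
    have hb1 : ∑ a, ∑ b, R a b c ≤ ∑ a, ∑ b, PFH a c * PGH b c / PH c := by
      refine Finset.sum_le_sum (fun a _ => Finset.sum_le_sum (fun b _ => ?_))
      by_cases hP : P a b c = 0
      · rw [hRdef]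
        simp only [hP, if_true, if_pos rfl]
        exact div_nonneg (mul_nonneg (hPFH0 a c) (hPGH0 b c)) (hPH0 c)
      · rw [hRdef]
        simp only [if_neg hP]
        exact le_refl _
    have hb2 : ∑ a, ∑ b, PFH a c * PGH b c / PH c
        = (∑ a, PFH a c) * (∑ b, PGH b c) / PH c := by
      rw [Finset.sum_mul_sum, Finset.sum_div]
      exact Finset.sum_congr rfl (fun a _ => (Finset.sum_div _ _ _).symm)
    have hb3 : (∑ a, PFH a c) = PH c := rfl
    have hb4 : (∑ b, PGH b c) = PH c := Finset.sum_comm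
    refine le_trans hb1 ?_
    rw [hb2, hb3, hb4]
    rcases eq_or_lt_of_le (hPH0 c) with hz | hz
    · rw [← hz]; simp
    · rw [mul_div_assoc, div_self (ne_of_gt hz), mul_one]
  have hmain : ∑ a, ∑ b, ∑ c, (P a b c - R a b c)
      ≤ ∑ a, ∑ b, ∑ c,
      (-(P a b c * Real.log (PFH a c)) + -(P a b c * Real.log (PGH b c))
        - -(P a b c * Real.log (P a b c)) - -(P a b c * Real.log (PH c))) :=
    Finset.sum_le_sum (fun a _ => Finset.sum_le_sum (fun b _ =>
      Finset.sum_le_sum (fun c _ => key a b c)))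
  have hsplit2 : ∑ a, ∑ b, ∑ c, (P a b c - R a b c)
      = (∑ a, ∑ b, ∑ c, P a b c) - ∑ a, ∑ b, ∑ c, R a b c := by
    simp only [Finset.sum_sub_distrib]
  rw [hsplit2, htot] at hmain
  linarith

lemma cmi_nonneg (p : Ω → ℝ) (hp0 : ∀ ω, 0 ≤ p ω) (hp1 : ∑ ω, p ω = 1)
    {α β γ : Type} [Fintype α] [DecidableEq α] [Fintype β] [DecidableEq β]
    [Fintype γ] [DecidableEq γ] (f : Ω → α) (g : Ω → β) (h : Ω → γ) :
    0 ≤ cmi p f g h := by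
  set P : α → β → γ → ℝ :=
    fun a b c => ∑ ω ∈ univ.filter (fun ω => f ω = a ∧ g ω = b ∧ h ω = c), p ω with hPdef
  have hP0 : ∀ a b c, 0 ≤ P a b c := fun a b c =>
    Finset.sum_nonneg (fun ω _ => hp0 ω)
  -- marginals
  set PFH : α → γ → ℝ := fun a c => ∑ b, P a b c with hPFHdef
  set PGH : β → γ → ℝ := fun b c => ∑ a, P a b c with hPGHdef
  set PH : γ → ℝ := fun c => ∑ a, ∑ b, P a b c with hPHdef
  have hPFH0 : ∀ a c, 0 ≤ PFH a c := fun a c => Finset.sum_nonneg fun b _ => hP0 a b c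
  have hPGH0 : ∀ b c, 0 ≤ PGH b c := fun b c => Finset.sum_nonneg fun a _ => hP0 a b c
  have hPH0 : ∀ c, 0 ≤ PH c := fun c => Finset.sum_nonneg fun a _ => hPFH0 a c
  have hPle : ∀ a b c, P a b c ≤ PFH a c := fun a b c =>
    Finset.single_le_sum (fun b' _ => hP0 a b' c) (Finset.mem_univ b)
  have hPle2 : ∀ a b c, P a b c ≤ PGH b c := fun a b c =>
    Finset.single_le_sum (fun a' _ => hP0 a' b c) (Finset.mem_univ a)
  have hPle3 : ∀ a c, PFH a c ≤ PH c := fun a c =>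
    Finset.single_le_sum (fun a' _ => hPFH0 a' c) (Finset.mem_univ a)
  -- entropy expansions
  have e3 : ent p (fun ω => (f ω, g ω, h ω)) = ∑ a, ∑ b, ∑ c, Real.negMulLog (P a b c) := by
    unfold ent
    rw [Fintype.sum_prod_type]
    refine Finset.sum_congr rfl (fun a _ => ?_)
    rw [Fintype.sum_prod_type]
    refine Finset.sum_congr rfl (fun b _ => Finset.sum_congr rfl (fun c _ => ?_))
    congr 1
    exact mass_congr p (fun ω => by simp [Prod.ext_iff])
  have efh : ent p (fun ω => (f ω, h ω)) = ∑ a, ∑ c, Real.negMulLog (PFH a c) := by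
    unfold ent
    rw [Fintype.sum_prod_type]
    refine Finset.sum_congr rfl (fun a _ => Finset.sum_congr rfl (fun c _ => ?_))
    congr 1
    rw [mass_congr p (R := fun ω => f ω = a ∧ h ω = c) (fun ω => by simp [Prod.ext_iff]),
      mass_split p g]
    exact Finset.sum_congr rfl fun b _ =>
      mass_congr p (fun ω => by tauto)
  have egh : ent p (fun ω => (g ω, h ω)) = ∑ b, ∑ c, Real.negMulLog (PGH b c) := by
    unfold ent
    rw [Fintype.sum_prod_type]
    refine Finset.sum_congr rfl (fun b _ => Finset.sum_congr rfl (fun c _ => ?_))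
    congr 1
    rw [mass_congr p (R := fun ω => g ω = b ∧ h ω = c) (fun ω => by simp [Prod.ext_iff]),
      mass_split p f]
    exact Finset.sum_congr rfl fun a _ =>
      mass_congr p (fun ω => by tauto)
  have eh : ent p h = ∑ c, Real.negMulLog (PH c) := by
    unfold ent
    refine Finset.sum_congr rfl (fun c _ => ?_)
    congr 1
    rw [mass_split p f]
    refine Finset.sum_congr rfl (fun a _ => ?_)
    rw [mass_split p g]
    exact Finset.sum_congr rfl fun b _ =>
      mass_congr p (fun ω => by tauto)
  -- total mass one
  have htot : ∑ c, PH c = 1 := by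
    rw [← hp1]
    have : ∑ ω, p ω = ∑ ω ∈ univ.filter (fun ω => True), p ω := by
      refine Finset.sum_congr ?_ (fun _ _ => rfl); simp
    rw [this, mass_split p h]
    refine Finset.sum_congr rfl (fun c _ => ?_)
    rw [mass_split p f]
    refine Finset.sum_congr rfl (fun a _ => ?_)
    rw [mass_split p g]
    exact Finset.sum_congr rfl fun b _ =>
      mass_congr p (fun ω => by tauto)
  -- log-form expansions
  have e3' : ent p (fun ω => (f ω, g ω, h ω))
      = ∑ a, ∑ b, ∑ c, -(P a b c * Real.log (P a b c)) := by
    rw [e3]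
    exact Finset.sum_congr rfl fun a _ => Finset.sum_congr rfl fun b _ =>
      Finset.sum_congr rfl fun c _ => by rw [Real.negMulLog]; ring
  have efh' : ent p (fun ω => (f ω, h ω))
      = ∑ a, ∑ b, ∑ c, -(P a b c * Real.log (PFH a c)) := by
    rw [efh]
    refine Finset.sum_congr rfl (fun a _ => ?_)
    rw [Finset.sum_comm]
    exact Finset.sum_congr rfl (fun c _ => negMulLog_sum _ _ rfl)
  have egh' : ent p (fun ω => (g ω, h ω))
      = ∑ a, ∑ b, ∑ c, -(P a b c * Real.log (PGH b c)) := by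
    rw [egh]
    have step : ∀ b, ∑ c, Real.negMulLog (PGH b c)
        = ∑ a, ∑ c, -(P a b c * Real.log (PGH b c)) := by
      intro b
      rw [Finset.sum_comm]
      exact Finset.sum_congr rfl (fun c _ => negMulLog_sum _ _ rfl)
    rw [Finset.sum_congr rfl (fun b _ => step b), Finset.sum_comm]
  have eh' : ent p h = ∑ a, ∑ b, ∑ c, -(P a b c * Real.log (PH c)) := by
    rw [eh]
    have step : ∀ c, Real.negMulLog (PH c)
        = ∑ a, ∑ b, -(P a b c * Real.log (PH c)) := by
      intro c
      rw [negMulLog_sum (fun a => PFH a c) _ rfl]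
      exact Finset.sum_congr rfl (fun a _ => neg_mul_sum _ _ _ rfl)
    rw [Finset.sum_congr rfl (fun c _ => step c), Finset.sum_comm]
    exact Finset.sum_congr rfl (fun a _ => Finset.sum_comm)
  -- assemble cmi as a single triple sum
  have hcmi : cmi p f g h = ∑ a, ∑ b, ∑ c,
      (-(P a b c * Real.log (PFH a c)) + -(P a b c * Real.log (PGH b c))
        - -(P a b c * Real.log (P a b c)) - -(P a b c * Real.log (PH c))) := by
    unfold cmi
    rw [e3', efh', egh', eh']
    simp only [← Finset.sum_sub_distrib, ← Finset.sum_add_distrib]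
  rw [hcmi]
  have htot' : ∑ a, ∑ b, ∑ c, P a b c = 1 := by
    rw [← htot]
    exact (Finset.sum_congr rfl fun a _ => Finset.sum_comm).trans Finset.sum_comm
  exact gibbs P hP0 htot'

end Aux2

section Comb
variable {Ω ι V : Type} [Fintype Ω] [Fintype ι] [DecidableEq ι] [Fintype V] [DecidableEq V]

lemma restr_eq_iff {Z : ι → Ω → V} {K : Finset ι} {ω ω' : Ω} :
    restr Z K ω = restr Z K ω' ↔ ∀ i ∈ K, Z i ω = Z i ω' := by
  constructor
  · intro h i hi; exact congrFun h ⟨i, hi⟩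
  · intro h; funext i; exact h i.1 i.2

noncomputable def E0 (p : Ω → ℝ) (Xi : ι → Ω → V) (K : Finset ι) : ℝ :=
  ent p (restr Xi K)

noncomputable def E1 (p : Ω → ℝ) (Xi Yv Yh : ι → Ω → V) (Y : Ω → V)
    (K L M : Finset ι) : ℝ :=
  ent p (fun ω => (restr Xi K ω, restr Yv L ω, restr Yh M ω, Y ω))

noncomputable def Jx (p : Ω → ℝ) (Xi Yv Yh : ι → Ω → V) (Y : Ω → V)
    (A B S : Finset ι) : ℝ :=
  cmi p (restr Xi S)
    (fun ω => (restr Yh (B \ S) ω, restr Yh A ω, Y ω))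
    (fun ω => (restr Xi A ω, restr Xi (B \ S) ω)) -
  cmi p (restr Yv S) (restr Yh S)
    (fun ω => (restr Xi A ω, restr Yh A ω, Y ω, restr Xi B ω, restr Yh (B \ S) ω))

lemma ent_irrel {α : Type} {i1 i1' : Fintype α} {i2 i2' : DecidableEq α}
    (p : Ω → ℝ) (f : Ω → α) : @ent Ω α _ i1 i2 p f = @ent Ω α _ i1' i2' p f := by
  congr 1 <;> exact Subsingleton.elim _ _

lemma ent_to_E0 {κ : Type} {i1 : Fintype κ} {i2 : DecidableEq κ} {f : Ω → κ}
    (p : Ω → ℝ) (Xi : ι → Ω → V) (K : Finset ι)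
    (hfg : ∀ ω ω', f ω = f ω' ↔ restr Xi K ω = restr Xi K ω') :
    @ent Ω κ _ i1 i2 p f = E0 p Xi K := by
  haveI := i1; haveI := i2
  exact (ent_irrel p f).trans (ent_congr p f _ hfg)

lemma ent_to_E1 {κ : Type} {i1 : Fintype κ} {i2 : DecidableEq κ} {f : Ω → κ}
    (p : Ω → ℝ) (Xi Yv Yh : ι → Ω → V) (Y : Ω → V) (K L M : Finset ι)
    (hfg : ∀ ω ω', f ω = f ω' ↔
      (restr Xi K ω, restr Yv L ω, restr Yh M ω, Y ω)
        = (restr Xi K ω', restr Yv L ω', restr Yh M ω', Y ω')) :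
    @ent Ω κ _ i1 i2 p f = E1 p Xi Yv Yh Y K L M := by
  haveI := i1; haveI := i2
  exact (ent_irrel p f).trans (ent_congr p f _ hfg)

variable (p : Ω → ℝ) (Xi Yv Yh : ι → Ω → V) (Y : Ω → V)

lemma J_formula (A B S : Finset ι) (hS : S ⊆ B) :
    Jx p Xi Yv Yh Y A B S
      = E0 p Xi (A ∪ B) - E0 p Xi (A ∪ (B \ S))
        + E1 p Xi Yv Yh Y (A ∪ (B \ S)) ∅ (A ∪ (B \ S))
        - E1 p Xi Yv Yh Y (A ∪ B) ∅ (A ∪ B)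
        - E1 p Xi Yv Yh Y (A ∪ B) S (A ∪ (B \ S))
        + E1 p Xi Yv Yh Y (A ∪ B) S (A ∪ B) := by
  obtain ⟨T, hT⟩ : ∃ T, B \ S = T := ⟨_, rfl⟩
  have hB : B = S ∪ T := by rw [← hT, Finset.union_sdiff_of_subset hS]
  simp only [Jx, cmi]
  rw [hT, hB]
  rw [ent_to_E0 (f := fun ω => (restr Xi S ω, restr Xi A ω, restr Xi T ω)) p Xi (A ∪ (S ∪ T))
      (fun ω ω' => by
        simp only [restr_eq_iff, Prod.mk.injEq, Finset.forall_mem_union, Finset.notMem_empty,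
        false_implies, implies_true, true_and, and_true]
        try tauto)]
  rw [ent_to_E1 (f := fun ω => ((restr Yh T ω, restr Yh A ω, Y ω), restr Xi A ω, restr Xi T ω)) p Xi Yv Yh Y (A ∪ T) ((∅ : Finset ι)) (A ∪ T)
      (fun ω ω' => by
        simp only [restr_eq_iff, Prod.mk.injEq, Finset.forall_mem_union, Finset.notMem_empty,
        false_implies, implies_true, true_and, and_true]
        try tauto)]
  rw [ent_to_E1 (f := fun ω => (restr Xi S ω, (restr Yh T ω, restr Yh A ω, Y ω), restr Xi A ω, restr Xi T ω)) p Xi Yv Yh Y (A ∪ (S ∪ T)) ((∅ : Finset ι)) (A ∪ T)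
      (fun ω ω' => by
        simp only [restr_eq_iff, Prod.mk.injEq, Finset.forall_mem_union, Finset.notMem_empty,
        false_implies, implies_true, true_and, and_true]
        try tauto)]
  rw [ent_to_E0 (f := fun ω => (restr Xi A ω, restr Xi T ω)) p Xi (A ∪ T)
      (fun ω ω' => by
        simp only [restr_eq_iff, Prod.mk.injEq, Finset.forall_mem_union, Finset.notMem_empty,
        false_implies, implies_true, true_and, and_true]
        try tauto)]
  rw [ent_to_E1 (f := fun ω => (restr Yv S ω, restr Xi A ω, restr Yh A ω, Y ω, restr Xi (S ∪ T) ω, restr Yh T ω)) p Xi Yv Yh Y (A ∪ (S ∪ T)) (S) (A ∪ T)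
      (fun ω ω' => by
        simp only [restr_eq_iff, Prod.mk.injEq, Finset.forall_mem_union, Finset.notMem_empty,
        false_implies, implies_true, true_and, and_true]
        try tauto)]
  rw [ent_to_E1 (f := fun ω => (restr Yh S ω, restr Xi A ω, restr Yh A ω, Y ω, restr Xi (S ∪ T) ω, restr Yh T ω)) p Xi Yv Yh Y (A ∪ (S ∪ T)) ((∅ : Finset ι)) (A ∪ (S ∪ T))
      (fun ω ω' => by
        simp only [restr_eq_iff, Prod.mk.injEq, Finset.forall_mem_union, Finset.notMem_empty,
        false_implies, implies_true, true_and, and_true]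
        try tauto)]
  rw [ent_to_E1 (f := fun ω => (restr Yv S ω, restr Yh S ω, restr Xi A ω, restr Yh A ω, Y ω, restr Xi (S ∪ T) ω, restr Yh T ω)) p Xi Yv Yh Y (A ∪ (S ∪ T)) (S) (A ∪ (S ∪ T))
      (fun ω ω' => by
        simp only [restr_eq_iff, Prod.mk.injEq, Finset.forall_mem_union, Finset.notMem_empty,
        false_implies, implies_true, true_and, and_true]
        try tauto)]
  rw [ent_to_E1 (f := fun ω => (restr Xi A ω, restr Yh A ω, Y ω, restr Xi (S ∪ T) ω, restr Yh T ω)) p Xi Yv Yh Y (A ∪ (S ∪ T)) ((∅ : Finset ι)) (A ∪ T)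
      (fun ω ω' => by
        simp only [restr_eq_iff, Prod.mk.injEq, Finset.forall_mem_union, Finset.notMem_empty,
        false_implies, implies_true, true_and, and_true]
        try tauto)]
  try ring

lemma cmi1_formula (A B S : Finset ι) (hS : S ⊆ B) :
    cmi p (restr Xi S) (restr Yh (B \ S))
      (fun ω => (restr Xi A ω, restr Yh A ω, Y ω, restr Xi (B \ S) ω, restr Yv (B \ S) ω))
    = E1 p Xi Yv Yh Y (A ∪ B) (B \ S) A + E1 p Xi Yv Yh Y (A ∪ (B \ S)) (B \ S) (A ∪ (B \ S))
      - E1 p Xi Yv Yh Y (A ∪ B) (B \ S) (A ∪ (B \ S))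
      - E1 p Xi Yv Yh Y (A ∪ (B \ S)) (B \ S) A := by
  obtain ⟨T, hT⟩ : ∃ T, B \ S = T := ⟨_, rfl⟩
  have hB : B = S ∪ T := by rw [← hT, Finset.union_sdiff_of_subset hS]
  simp only [cmi]
  rw [hT, hB]
  rw [ent_to_E1 (f := fun ω => (restr Xi S ω, restr Xi A ω, restr Yh A ω, Y ω, restr Xi T ω, restr Yv T ω)) p Xi Yv Yh Y (A ∪ (S ∪ T)) (T) (A)
      (fun ω ω' => by
        simp only [restr_eq_iff, Prod.mk.injEq, Finset.forall_mem_union, Finset.notMem_empty,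
        false_implies, implies_true, true_and, and_true]
        try tauto)]
  rw [ent_to_E1 (f := fun ω => (restr Yh T ω, restr Xi A ω, restr Yh A ω, Y ω, restr Xi T ω, restr Yv T ω)) p Xi Yv Yh Y (A ∪ T) (T) (A ∪ T)
      (fun ω ω' => by
        simp only [restr_eq_iff, Prod.mk.injEq, Finset.forall_mem_union, Finset.notMem_empty,
        false_implies, implies_true, true_and, and_true]
        try tauto)]
  rw [ent_to_E1 (f := fun ω => (restr Xi S ω, restr Yh T ω, restr Xi A ω, restr Yh A ω, Y ω, restr Xi T ω, restr Yv T ω)) p Xi Yv Yh Y (A ∪ (S ∪ T)) (T) (A ∪ T)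
      (fun ω ω' => by
        simp only [restr_eq_iff, Prod.mk.injEq, Finset.forall_mem_union, Finset.notMem_empty,
        false_implies, implies_true, true_and, and_true]
        try tauto)]
  rw [ent_to_E1 (f := fun ω => (restr Xi A ω, restr Yh A ω, Y ω, restr Xi T ω, restr Yv T ω)) p Xi Yv Yh Y (A ∪ T) (T) (A)
      (fun ω ω' => by
        simp only [restr_eq_iff, Prod.mk.injEq, Finset.forall_mem_union, Finset.notMem_empty,
        false_implies, implies_true, true_and, and_true]
        try tauto)]
  try ring

lemma cmi2_formula (A B S : Finset ι) (hS : S ⊆ B) :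
    cmi p (restr Yv S) (restr Yh (B \ S))
      (fun ω => (restr Xi A ω, restr Yh A ω, Y ω, restr Xi B ω, restr Yv (B \ S) ω))
    = E1 p Xi Yv Yh Y (A ∪ B) B A + E1 p Xi Yv Yh Y (A ∪ B) (B \ S) (A ∪ (B \ S))
      - E1 p Xi Yv Yh Y (A ∪ B) B (A ∪ (B \ S)) - E1 p Xi Yv Yh Y (A ∪ B) (B \ S) A := by
  obtain ⟨T, hT⟩ : ∃ T, B \ S = T := ⟨_, rfl⟩
  have hB : B = S ∪ T := by rw [← hT, Finset.union_sdiff_of_subset hS]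
  simp only [cmi]
  rw [hT, hB]
  rw [ent_to_E1 (f := fun ω => (restr Yv S ω, restr Xi A ω, restr Yh A ω, Y ω, restr Xi (S ∪ T) ω, restr Yv T ω)) p Xi Yv Yh Y (A ∪ (S ∪ T)) (S ∪ T) (A)
      (fun ω ω' => by
        simp only [restr_eq_iff, Prod.mk.injEq, Finset.forall_mem_union, Finset.notMem_empty,
        false_implies, implies_true, true_and, and_true]
        try tauto)]
  rw [ent_to_E1 (f := fun ω => (restr Yh T ω, restr Xi A ω, restr Yh A ω, Y ω, restr Xi (S ∪ T) ω, restr Yv T ω)) p Xi Yv Yh Y (A ∪ (S ∪ T)) (T) (A ∪ T)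
      (fun ω ω' => by
        simp only [restr_eq_iff, Prod.mk.injEq, Finset.forall_mem_union, Finset.notMem_empty,
        false_implies, implies_true, true_and, and_true]
        try tauto)]
  rw [ent_to_E1 (f := fun ω => (restr Yv S ω, restr Yh T ω, restr Xi A ω, restr Yh A ω, Y ω, restr Xi (S ∪ T) ω, restr Yv T ω)) p Xi Yv Yh Y (A ∪ (S ∪ T)) (S ∪ T) (A ∪ T)
      (fun ω ω' => by
        simp only [restr_eq_iff, Prod.mk.injEq, Finset.forall_mem_union, Finset.notMem_empty,
        false_implies, implies_true, true_and, and_true]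
        try tauto)]
  rw [ent_to_E1 (f := fun ω => (restr Xi A ω, restr Yh A ω, Y ω, restr Xi (S ∪ T) ω, restr Yv T ω)) p Xi Yv Yh Y (A ∪ (S ∪ T)) (T) (A)
      (fun ω ω' => by
        simp only [restr_eq_iff, Prod.mk.injEq, Finset.forall_mem_union, Finset.notMem_empty,
        false_implies, implies_true, true_and, and_true]
        try tauto)]
  try ring

lemma cmi3_formula (A B S : Finset ι) (hS : S ⊆ B) :
    cmi p (restr Yv (B \ S)) (restr Yh S)
      (fun ω => (restr Xi A ω, restr Yh A ω, Y ω, restr Xi B ω, restr Yh (B \ S) ω,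
        restr Yv S ω))
    = E1 p Xi Yv Yh Y (A ∪ B) B (A ∪ (B \ S)) + E1 p Xi Yv Yh Y (A ∪ B) S (A ∪ B)
      - E1 p Xi Yv Yh Y (A ∪ B) B (A ∪ B) - E1 p Xi Yv Yh Y (A ∪ B) S (A ∪ (B \ S)) := by
  obtain ⟨T, hT⟩ : ∃ T, B \ S = T := ⟨_, rfl⟩
  have hB : B = S ∪ T := by rw [← hT, Finset.union_sdiff_of_subset hS]
  simp only [cmi]
  rw [hT, hB]
  rw [ent_to_E1 (f := fun ω => (restr Yv T ω, restr Xi A ω, restr Yh A ω, Y ω, restr Xi (S ∪ T) ω, restr Yh T ω, restr Yv S ω)) p Xi Yv Yh Y (A ∪ (S ∪ T)) (S ∪ T) (A ∪ T)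
      (fun ω ω' => by
        simp only [restr_eq_iff, Prod.mk.injEq, Finset.forall_mem_union, Finset.notMem_empty,
        false_implies, implies_true, true_and, and_true]
        try tauto)]
  rw [ent_to_E1 (f := fun ω => (restr Yh S ω, restr Xi A ω, restr Yh A ω, Y ω, restr Xi (S ∪ T) ω, restr Yh T ω, restr Yv S ω)) p Xi Yv Yh Y (A ∪ (S ∪ T)) (S) (A ∪ (S ∪ T))
      (fun ω ω' => by
        simp only [restr_eq_iff, Prod.mk.injEq, Finset.forall_mem_union, Finset.notMem_empty,
        false_implies, implies_true, true_and, and_true]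
        try tauto)]
  rw [ent_to_E1 (f := fun ω => (restr Yv T ω, restr Yh S ω, restr Xi A ω, restr Yh A ω, Y ω, restr Xi (S ∪ T) ω, restr Yh T ω, restr Yv S ω)) p Xi Yv Yh Y (A ∪ (S ∪ T)) (S ∪ T) (A ∪ (S ∪ T))
      (fun ω ω' => by
        simp only [restr_eq_iff, Prod.mk.injEq, Finset.forall_mem_union, Finset.notMem_empty,
        false_implies, implies_true, true_and, and_true]
        try tauto)]
  rw [ent_to_E1 (f := fun ω => (restr Xi A ω, restr Yh A ω, Y ω, restr Xi (S ∪ T) ω, restr Yh T ω, restr Yv S ω)) p Xi Yv Yh Y (A ∪ (S ∪ T)) (S) (A ∪ T)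
      (fun ω ω' => by
        simp only [restr_eq_iff, Prod.mk.injEq, Finset.forall_mem_union, Finset.notMem_empty,
        false_implies, implies_true, true_and, and_true]
        try tauto)]
  try ring

lemma J_key (hp0 : ∀ ω, 0 ≤ p ω) (hp1 : ∑ ω, p ω = 1) (A B S : Finset ι) (hS : S ⊆ B) :
    Jx p Xi Yv Yh Y A B B ≤ Jx p Xi Yv Yh Y A B S + Jx p Xi Yv Yh Y A (B \ S) (B \ S) := by
  have f1 := J_formula p Xi Yv Yh Y A B S hS
  have f2 := J_formula p Xi Yv Yh Y A B B (Finset.Subset.refl B)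
  have f3 := J_formula p Xi Yv Yh Y A (B \ S) (B \ S) (Finset.Subset.refl _)
  rw [Finset.sdiff_self, Finset.union_empty] at f2 f3
  have c1 := cmi1_formula p Xi Yv Yh Y A B S hS
  have c2 := cmi2_formula p Xi Yv Yh Y A B S hS
  have c3 := cmi3_formula p Xi Yv Yh Y A B S hS
  have n1 := cmi_nonneg p hp0 hp1 (restr Xi S) (restr Yh (B \ S))
    (fun ω => (restr Xi A ω, restr Yh A ω, Y ω, restr Xi (B \ S) ω, restr Yv (B \ S) ω))
  have n2 := cmi_nonneg p hp0 hp1 (restr Yv S) (restr Yh (B \ S))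
    (fun ω => (restr Xi A ω, restr Yh A ω, Y ω, restr Xi B ω, restr Yv (B \ S) ω))
  have n3 := cmi_nonneg p hp0 hp1 (restr Yv (B \ S)) (restr Yh S)
    (fun ω => (restr Xi A ω, restr Yh A ω, Y ω, restr Xi B ω, restr Yh (B \ S) ω,
      restr Yv S ω))
  rw [c1] at n1
  rw [c2] at n2
  rw [c3] at n3
  rw [f1, f2, f3]
  linarith

lemma J_empty (A B : Finset ι) :
    Jx p Xi Yv Yh Y A B ∅ = 0 := by
  rw [J_formula p Xi Yv Yh Y A B ∅ (Finset.empty_subset B), Finset.sdiff_empty]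
  try ring

lemma J_aux (hp0 : ∀ ω, 0 ≤ p ω) (hp1 : ∑ ω, p ω = 1) : ∀ n (A B : Finset ι),
    B.card ≤ n → B.Nonempty →
    0 ≤ Jx p Xi Yv Yh Y A B B →
    ∃ C : Finset ι, C ⊆ B ∧ C.Nonempty ∧ ∀ S ⊆ C, 0 ≤ Jx p Xi Yv Yh Y A C S := by
  intro n
  induction n with
  | zero =>
    intro A B hc hne _
    have := Finset.card_pos.mpr hne
    omega
  | succ n ih =>
    intro A B hc hne hB
    by_cases hall : ∀ S ⊆ B, 0 ≤ Jx p Xi Yv Yh Y A B S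
    · exact ⟨B, Finset.Subset.refl B, hne, hall⟩
    · push_neg at hall
      obtain ⟨S, hSB, hSneg⟩ := hall
      have hSne : S.Nonempty := by
        rcases S.eq_empty_or_nonempty with rfl | h
        · rw [J_empty p Xi Yv Yh Y] at hSneg; linarith
        · exact h
      have hTne : (B \ S).Nonempty := by
        rcases (B \ S).eq_empty_or_nonempty with he | h
        · have : S = B :=
            Finset.Subset.antisymm hSB (Finset.sdiff_eq_empty_iff_subset.mp he)
          rw [this] at hSneg; linarith
        · exact h
      have hT : 0 ≤ Jx p Xi Yv Yh Y A (B \ S) (B \ S) := by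
        have := J_key p Xi Yv Yh Y hp0 hp1 A B S hSB
        linarith
      have hcard : (B \ S).card ≤ n := by
        have h1 := Finset.card_sdiff_of_subset hSB
        have h2 := Finset.card_pos.mpr hSne
        have h3 := Finset.card_le_card hSB
        omega
      obtain ⟨C, hCT, hCne, hC⟩ := ih A (B \ S) hcard hTne hT
      exact ⟨C, hCT.trans (Finset.sdiff_subset), hCne, hC⟩

end Comb

theorem stmt_14 {Ω ι VX V : Type} [Fintype Ω] [Fintype ι] [DecidableEq ι]
    [Fintype VX] [DecidableEq VX] [Fintype V] [DecidableEq V]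
    (p : Ω → ℝ) (hp0 : ∀ ω, 0 ≤ p ω) (hp1 : ∑ ω, p ω = 1)
    (X : Ω → VX) (Y : Ω → V) (Xi Yv Yh : ι → Ω → V)
    (JAB : Finset ι → Finset ι → Finset ι → ℝ)
    (hJAB : ∀ A B S : Finset ι, JAB A B S =
      cmi p (restr Xi S)
        (fun ω => (restr Yh (B \ S) ω, restr Yh A ω, Y ω))
        (fun ω => (restr Xi A ω, restr Xi (B \ S) ω)) -
      cmi p (restr Yv S) (restr Yh S)
        (fun ω => (restr Xi A ω, restr Yh A ω, Y ω, restr Xi B ω, restr Yh (B \ S) ω)))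
    (A B : Finset ι) (hAB : Disjoint A B) (hBne : B.Nonempty)
    (hB : 0 ≤ JAB A B B) :
    ∃ C : Finset ι, C ⊆ B ∧ C.Nonempty ∧ ∀ S ⊆ C, 0 ≤ JAB A C S := by
  have hJ : ∀ A B S : Finset ι, JAB A B S = Jx p Xi Yv Yh Y A B S := by
    intro A B S
    rw [hJAB]
    rfl
  have hB' : 0 ≤ Jx p Xi Yv Yh Y A B B := by rw [← hJ]; exact hB
  obtain ⟨C, hC1, hC2, hC3⟩ :=
    J_aux p Xi Yv Yh Y hp0 hp1 B.card A B le_rfl hBne hB'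
  refine ⟨C, hC1, hC2, fun S hS => ?_⟩
  rw [hJ]
  exact hC3 S hS
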